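/- Let D be an abelian monoidal category with right exact tensor product in both variables, A an algebra object, M a right A-module object, and I a nilpotent ideal of A (Iᵏ = 0 for some k). If MI = M then M = 0. -/

import Mathlib

open CategoryTheory MonoidalCategory CategoryTheory.Limits

section

variable {C : Type*} [Category C] [MonoidalCategory C] [Abelian C]

/-- A subobject `X ↪ A` of an algebra object `A` is a (two-sided) ideal if left and
right multiplication by `A` factor through it. -/
def IsIdealSub (A : Mon C) (X : Subobject A.X) : Prop :=
  (∃ l : A.X ⊗ (X : C) ⟶ (X : C), l ≫ X.arrow = (𝟙 A.X ⊗ₘ X.arrow) ≫ MonObj.mul (X := A.X)) ∧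
  (∃ r : (X : C) ⊗ A.X ⟶ (X : C), r ≫ X.arrow = (X.arrow ⊗ₘ 𝟙 A.X) ≫ MonObj.mul (X := A.X))

/-- The product `XY` of two subobjects of an algebra object `A`: the image of
`X ⊗ Y ⟶ A ⊗ A ⟶ A`. -/
noncomputable def subMul (A : Mon C) (X Y : Subobject A.X) : Subobject A.X :=
  Subobject.mk (image.ι ((X.arrow ⊗ₘ Y.arrow) ≫ MonObj.mul (X := A.X)))

/-- `subPow A X n` is the `(n+1)`-st power of the subobject `X` of `A`. -/
noncomputable def subPow (A : Mon C) (X : Subobject A.X) : ℕ → Subobject A.X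
  | 0 => X
  | n + 1 => subMul A (subPow A X n) X

end

section auxstep

variable {D : Type*} [Category D] [MonoidalCategory D] [Abelian D]

/-- Auxiliary step: if `MJ = M` and `MI = M` then `M(JI) = M`. -/
lemma stmt11_step (A : Mon D) (M : D) (act : M ⊗ A.X ⟶ M)
    (hassoc : (𝟙 M ⊗ₘ MonObj.mul (X := A.X)) ≫ act = (α_ M A.X A.X).inv ≫ (act ⊗ₘ 𝟙 A.X) ≫ act)
    [PreservesFiniteColimits (tensorLeft M)]
    (I J : Subobject A.X)
    [PreservesFiniteColimits (tensorRight (I : D))]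
    (hI : Epi ((𝟙 M ⊗ₘ I.arrow) ≫ act))
    (hJ : Epi ((𝟙 M ⊗ₘ J.arrow) ≫ act)) :
    Epi ((𝟙 M ⊗ₘ (subMul A J I).arrow) ≫ act) := by
  set g := (J.arrow ⊗ₘ I.arrow) ≫ MonObj.mul (X := A.X) with hg
  have key : (𝟙 M ⊗ₘ g) ≫ act =
      (α_ M (J : D) (I : D)).inv ≫ ((((𝟙 M ⊗ₘ J.arrow) ≫ act) ⊗ₘ 𝟙 (I : D))) ≫
        ((𝟙 M ⊗ₘ I.arrow) ≫ act) := by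
    rw [hg, id_tensor_comp, Category.assoc, hassoc]
    rw [associator_inv_naturality_assoc (𝟙 M) J.arrow I.arrow]
    congr 1
    simp only [← Category.assoc, tensorHom_comp_tensorHom, Category.comp_id, Category.id_comp]
  haveI hE1 : Epi (((𝟙 M ⊗ₘ J.arrow) ≫ act) ⊗ₘ 𝟙 (I : D)) := by
    rw [tensorHom_id]
    exact (tensorRight (I : D)).map_epi _
  have h1 : Epi ((𝟙 M ⊗ₘ g) ≫ act) := by
    rw [key]
    infer_instance
  have h2 : (𝟙 M ⊗ₘ factorThruImage g) ≫ ((𝟙 M ⊗ₘ image.ι g) ≫ act) = (𝟙 M ⊗ₘ g) ≫ act := by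
    rw [← Category.assoc, ← id_tensor_comp, image.fac]
  haveI hE2 : Epi (𝟙 M ⊗ₘ factorThruImage g) := by
    rw [id_tensorHom]
    exact (tensorLeft M).map_epi _
  rw [← h2] at h1
  haveI := h1
  haveI h3 : Epi ((𝟙 M ⊗ₘ image.ι g) ≫ act) :=
    epi_of_epi (𝟙 M ⊗ₘ factorThruImage g) _
  have harr : (subMul A J I).arrow =
      (Subobject.underlyingIso (image.ι g)).hom ≫ image.ι g := by
    exact (Iso.inv_comp_eq _).1 (Subobject.underlyingIso_arrow (image.ι g))
  rw [harr]
  erw [id_tensor_comp]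
  rw [Category.assoc]
  haveI : IsIso (𝟙 M ⊗ₘ (Subobject.underlyingIso (image.ι g)).hom) := by
    rw [id_tensorHom]
    infer_instance
  exact @epi_comp _ _ _ _ _ _ (@IsIso.epi_of_iso _ _ _ _ _ this) _ h3

end auxstep

/-- Let `D` be an abelian monoidal category with right exact
tensor product in both variables, `A` an algebra object, `(M, act)` a right
`A`-module object and `I` a nilpotent ideal of `A`.  If `MI = M` (i.e. the
composite `M ⊗ I ⟶ M ⊗ A ⟶ M` is an epimorphism) then `M = 0`. -/
theorem stmt11 {D : Type*} [Category D] [MonoidalCategory D] [Abelian D]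
    (hre : ∀ Z : D, Nonempty (PreservesFiniteColimits (tensorLeft Z)) ∧
      Nonempty (PreservesFiniteColimits (tensorRight Z)))
    (A : Mon D) (M : D) (act : M ⊗ A.X ⟶ M)
    (hunit : (𝟙 M ⊗ₘ MonObj.one (X := A.X)) ≫ act = (ρ_ M).hom)
    (hassoc : (𝟙 M ⊗ₘ MonObj.mul (X := A.X)) ≫ act = (α_ M A.X A.X).inv ≫ (act ⊗ₘ 𝟙 A.X) ≫ act)
    (I : Subobject A.X) (hI : IsIdealSub A I)
    (hnil : ∃ n : ℕ, subPow A I n = ⊥)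
    (hMI : Epi ((𝟙 M ⊗ₘ I.arrow) ≫ act)) :
    IsZero M := by
  haveI : PreservesFiniteColimits (tensorLeft M) := (hre M).1.some
  haveI : PreservesFiniteColimits (tensorRight (I : D)) := (hre _).2.some
  have hpow : ∀ n, Epi ((𝟙 M ⊗ₘ (subPow A I n).arrow) ≫ act) := by
    intro n
    induction n with
    | zero => exact hMI
    | succ n ih => exact stmt11_step A M act hassoc I _ hMI ih
  obtain ⟨n, hn⟩ := hnil
  have h := hpow n
  rw [hn, Subobject.bot_arrow] at h
  have hz : (𝟙 M ⊗ₘ (0 : (((⊥ : Subobject A.X)) : D) ⟶ A.X)) = 0 := by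
    rw [id_tensorHom]
    exact (tensorLeft M).map_zero _ _
  rw [hz, zero_comp] at h
  haveI := h
  rw [IsZero.iff_id_eq_zero]
  exact (cancel_epi (0 : M ⊗ (Subobject.underlying.obj (⊥ : Subobject A.X)) ⟶ M)).1 (by simp)
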